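/- Let G be a torsion-free group and let H be an infinite cyclic subgroup of G generated by an element x with the property that ⟨x⟩ is maximal among cyclic subgroups of G containing it (i.e., if x = w^k for some w in G and integer k, then w ∈ ⟨x⟩). Suppose N is a subgroup of G containing H with H normal in N. Then the quotient N/H is torsion-free, provided that any α in N with α^m ∈ H for some nonzero m commutes with x. -/

import Mathlib

/-- A torsion-free monoid has no elements of finite order except `1`
(the definition `Monoid.IsTorsionFree` of the older Mathlib, since removed). -/
def Monoid.IsTorsionFree (G : Type*) [Monoid G] : Prop :=
  ∀ g : G, g ≠ 1 → ¬IsOfFinOrder g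

lemma tf_zpow_eq_one {G : Type*} [Group G] (htf : Monoid.IsTorsionFree G) {y : G} {m : ℤ}
    (hm : m ≠ 0) (h : y ^ m = 1) : y = 1 := by
  by_contra hy
  refine htf y hy (isOfFinOrder_iff_pow_eq_one.2 ⟨m.natAbs, Int.natAbs_pos.2 hm, ?_⟩)
  rcases Int.natAbs_eq m with h' | h'
  · have := h; rw [h', zpow_natCast] at this; exact this
  · have := h; rw [h', zpow_neg, zpow_natCast, inv_eq_one] at this; exact this

theorem quotient_by_maximal_cyclic_torsionFree {G : Type*} [Group G]
    (htf : Monoid.IsTorsionFree G) (x : G)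
    (hmax : ∀ (w : G) (k : ℤ), x = w ^ k → w ∈ Subgroup.zpowers x)
    (N : Subgroup G) (hx : x ∈ N)
    (hnorm : ((Subgroup.zpowers x).subgroupOf N).Normal)
    (hcomm : ∀ α ∈ N, (∃ m : ℤ, m ≠ 0 ∧ α ^ m ∈ Subgroup.zpowers x) → α * x = x * α) :
    Monoid.IsTorsionFree (N ⧸ (Subgroup.zpowers x).subgroupOf N) := by
  intro g hg hfin
  apply hg
  obtain ⟨α, rfl⟩ := QuotientGroup.mk_surjective g
  obtain ⟨n, hn, hpow⟩ := isOfFinOrder_iff_pow_eq_one.1 hfin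
  rw [← QuotientGroup.mk_pow, QuotientGroup.eq_one_iff, Subgroup.mem_subgroupOf] at hpow
  obtain ⟨k, hk⟩ := Subgroup.mem_zpowers_iff.1 hpow
  set a : G := (α : G) with ha
  have hank : a ^ (n : ℤ) = x ^ k := by
    rw [zpow_natCast, hk]; push_cast; rfl
  have hnz : (n : ℤ) ≠ 0 := Int.natCast_ne_zero.2 hn.ne'
  have hcax : Commute a x :=
    hcomm a α.2 ⟨(n : ℤ), hnz, hank ▸ Subgroup.zpow_mem _ (Subgroup.mem_zpowers x) k⟩
  have hmem : a ∈ Subgroup.zpowers x := by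
    have hgpos : 0 < Int.gcd (n : ℤ) k :=
      Nat.pos_of_ne_zero (by simp [Int.gcd_eq_zero_iff, hnz, hn.ne'])
    set d : ℤ := (Int.gcd (n : ℤ) k : ℤ) with hd
    have hdpos : (0:ℤ) < d := hd ▸ (by exact_mod_cast hgpos)
    obtain ⟨n', hn'⟩ : d ∣ (n : ℤ) := Int.gcd_dvd_left _ _
    obtain ⟨k', hk'⟩ : d ∣ k := Int.gcd_dvd_right _ _
    have hcop : IsCoprime n' k' := by
      have hg := Int.gcd_div_gcd_div_gcd (i := (n:ℤ)) (j := k) hgpos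
      rw [Int.isCoprime_iff_gcd_eq_one]
      have hn'' : n' = (n:ℤ) / d := by
        rw [hn', Int.mul_ediv_cancel_left _ hdpos.ne']
      have hk'' : k' = k / d := by
        rw [hk', Int.mul_ediv_cancel_left _ hdpos.ne']
      rw [hn'', hk'']; exact hg
    have hstep : a ^ n' = x ^ k' := by
      have hc : Commute (a ^ n') (x ^ (-k')) := hcax.zpow_zpow _ _
      have h1 : (a ^ n' * x ^ (-k')) ^ d = 1 := by
        rw [hc.mul_zpow, ← zpow_mul, ← zpow_mul]
        have e1 : n' * d = (n:ℤ) := by rw [mul_comm]; exact hn'.symm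
        have e2 : -k' * d = -k := by rw [neg_mul, mul_comm, ← hk']
        rw [e1, e2, hank, ← zpow_add, add_neg_cancel, zpow_zero]
      have h2 := tf_zpow_eq_one htf hdpos.ne' h1
      rw [zpow_neg] at h2
      exact mul_inv_eq_one.1 h2
    obtain ⟨u, v, huv⟩ := hcop
    have hw : x = (a ^ v * x ^ u) ^ n' := by
      rw [(hcax.zpow_zpow v u).mul_zpow, ← zpow_mul, ← zpow_mul, mul_comm v n', zpow_mul,
          hstep, ← zpow_mul, ← zpow_add,
          show k' * v + u * n' = 1 by linarith, zpow_one]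
    obtain ⟨t, ht⟩ := Subgroup.mem_zpowers_iff.1 (hmax _ _ hw)
    have hav : a ^ v = x ^ (t - u) := by
      rw [zpow_sub, ht]; group
    have hdecomp : a = a ^ (n' * u) * a ^ (v * k') := by
      rw [← zpow_add, show n' * u + v * k' = 1 by linarith, zpow_one]
    rw [hdecomp, zpow_mul, zpow_mul, hstep, hav]
    exact Subgroup.mul_mem _
      (Subgroup.zpow_mem _ (Subgroup.zpow_mem _ (Subgroup.mem_zpowers x) _) _)
      (Subgroup.zpow_mem _ (Subgroup.zpow_mem _ (Subgroup.mem_zpowers x) _) _)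
  rw [QuotientGroup.eq_one_iff, Subgroup.mem_subgroupOf]
  exact hmem
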